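/- Let H be a finite simple graph with LIPCO(H) > 5. Then there exist an orbit ψ of H and a set S ∈ IS(ψ) such that the graph H_S has an induced cycle of length at least 6, i.e., LICL(H_S) > 5. Specifically, if the longest induced path between two vertices h, h' of the same orbit has h = h', then H itself has an induced cycle of length at least 6 and one may take S = {h}; if h ≠ h', then S = {h, h'} ∈ IS(ψ) and merging h and h' turns that induced path into an induced cycle of length at least 6 in H_S. -/

import Mathlib

open scoped Classical

/-- `ψ` is an orbit of the vertices of `H` under its automorphism group. -/
def IsOrbit {V : Type*} (H : SimpleGraph V) (ψ : Finset V) : Prop :=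
  ∃ h : V, ∀ u : V, u ∈ ψ ↔ ∃ σ : H ≃g H, σ h = u

/-- `IS(ψ)`: the nonempty subsets of `ψ` that are independent sets in `H`. -/
noncomputable def indepSubsets {V : Type*} (H : SimpleGraph V) (ψ : Finset V) :
    Finset (Finset V) :=
  ψ.powerset.filter fun S => S.Nonempty ∧ ∀ a ∈ S, ∀ b ∈ S, ¬ H.Adj a b

/-- `H_S`: the graph obtained from `H` by merging all vertices of `S` into the single
new vertex `none` (playing the role of `h_S`), removing duplicate edges. -/
def mergeGraph {V : Type*} (H : SimpleGraph V) (S : Finset V) :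
    SimpleGraph (Option {x : V // x ∉ S}) where
  Adj a b :=
    match a, b with
    | none, none => False
    | none, some y => ∃ s ∈ S, H.Adj s y.1
    | some x, none => ∃ s ∈ S, H.Adj s x.1
    | some x, some y => H.Adj x.1 y.1
  symm := by
    constructor
    rintro (_ | x) (_ | y) hab
    · exact hab
    · exact hab
    · exact hab
    · exact hab.symm
  loopless := by
    constructor
    rintro (_ | x) hab
    · exact hab
    · exact H.irrefl hab

/-- `VertexHom_{H,h}(v)`: the number of homomorphisms from `H` to `G` mapping `h` to `v`. -/
noncomputable def vertexHom {V W : Type*} (H : SimpleGraph V) (G : SimpleGraph W)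
    (h : V) (v : W) : ℕ :=
  Nat.card {φ : H →g G // φ h = v}

/-- `OrbitHom_{H,ψ}(v)`: the number of homomorphisms from `H` to `G` mapping some
vertex of the orbit `ψ` to `v`. -/
noncomputable def orbitHom {V W : Type*} (H : SimpleGraph V) (G : SimpleGraph W)
    (ψ : Finset V) (v : W) : ℕ :=
  Nat.card {φ : H →g G // ∃ h ∈ ψ, φ h = v}

/-- `Hom(H,G)`: the total number of homomorphisms from `H` to `G`. -/
noncomputable def homCount {V W : Type*} (H : SimpleGraph V) (G : SimpleGraph W) : ℕ :=
  Nat.card (H →g G)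

/-- A walk is induced if any two adjacent vertices on it are joined by an edge of the walk. -/
def IsInducedWalk {V : Type*} (H : SimpleGraph V) {u w : V} (p : H.Walk u w) : Prop :=
  ∀ a ∈ p.support, ∀ b ∈ p.support, H.Adj a b → s(a, b) ∈ p.edges

/-- `LICL(H)`: the length of the longest induced cycle of `H` (0 if there is none). -/
noncomputable def LICL {V : Type*} (H : SimpleGraph V) : ℕ :=
  sSup {n | ∃ (u : V) (c : H.Walk u u), c.IsCycle ∧ IsInducedWalk H c ∧ c.length = n}

/-- `LIPCO(H)`: the length of the longest induced simple path between two vertices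
`h, h'` of the same orbit of `H`, where `h` may equal `h'`, forming an induced cycle. -/
noncomputable def LIPCO {V : Type*} (H : SimpleGraph V) : ℕ :=
  sSup ({n | ∃ (h h' : V) (p : H.Walk h h'), h ≠ h' ∧ (∃ σ : H ≃g H, σ h = h') ∧
          p.IsPath ∧ IsInducedWalk H p ∧ p.length = n} ∪
        {n | ∃ (h : V) (c : H.Walk h h), c.IsCycle ∧ IsInducedWalk H c ∧ c.length = n})

/-- An orientation of a simple graph `G`: each edge receives exactly one direction. -/
structure GraphOrientation {V : Type*} (G : SimpleGraph V) where
  rel : V → V → Prop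
  consistent : ∀ u v, G.Adj u v ↔ (rel u v ∨ rel v u)
  antisymm : ∀ u v, rel u v → ¬ rel v u

/-- An orientation is acyclic if the resulting digraph has no directed cycle. -/
def GraphOrientation.IsAcyclic {V : Type*} {G : SimpleGraph V} (O : GraphOrientation G) : Prop :=
  ∀ v : V, ¬ Relation.TransGen O.rel v v

/-! ### Auxiliary machinery -/

section Aux

open SimpleGraph Walk

variable {V : Type*}

/-- The canonical vertex map from `V` to the vertex set of `mergeGraph H S`. -/
noncomputable def mergePhi (S : Finset V) (v : V) : Option {x : V // x ∉ S} :=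
  if hv : v ∈ S then none else some ⟨v, hv⟩

lemma mergePhi_of_mem {S : Finset V} {v : V} (hv : v ∈ S) : mergePhi S v = none :=
  dif_pos hv

lemma mergePhi_of_not_mem {S : Finset V} {v : V} (hv : v ∉ S) :
    mergePhi S v = some ⟨v, hv⟩ := dif_neg hv

lemma mergePhi_eq_none {S : Finset V} {v : V} (h : mergePhi S v = none) : v ∈ S := by
  by_contra hv
  rw [mergePhi_of_not_mem hv] at h
  simp at h

lemma mergePhi_eq_some {S : Finset V} {v : V} {w : {x : V // x ∉ S}}
    (h : mergePhi S v = some w) : v = w.1 := by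
  by_cases hv : v ∈ S
  · rw [mergePhi_of_mem hv] at h; simp at h
  · rw [mergePhi_of_not_mem hv] at h
    exact congrArg Subtype.val (Option.some.inj h)

lemma mergeGraph_adj_none_none {H : SimpleGraph V} {S : Finset V} :
    ¬ (mergeGraph H S).Adj none none := fun h => h

lemma mergeGraph_adj_none_some {H : SimpleGraph V} {S : Finset V} {y : {x : V // x ∉ S}} :
    (mergeGraph H S).Adj none (some y) ↔ ∃ s ∈ S, H.Adj s y.1 := Iff.rfl

lemma mergeGraph_adj_some_none {H : SimpleGraph V} {S : Finset V} {y : {x : V // x ∉ S}} :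
    (mergeGraph H S).Adj (some y) none ↔ ∃ s ∈ S, H.Adj s y.1 := Iff.rfl

lemma mergeGraph_adj_some_some {H : SimpleGraph V} {S : Finset V} {x y : {x : V // x ∉ S}} :
    (mergeGraph H S).Adj (some x) (some y) ↔ H.Adj x.1 y.1 := Iff.rfl

/-- If `S` is independent in `H`, merging `S` gives a graph homomorphism. -/
noncomputable def mergeHom (H : SimpleGraph V) (S : Finset V)
    (hS : ∀ a ∈ S, ∀ b ∈ S, ¬ H.Adj a b) : H →g mergeGraph H S where
  toFun := mergePhi S
  map_rel' := by
    intro a b hab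
    by_cases ha : a ∈ S <;> by_cases hb : b ∈ S
    · exact absurd hab (hS a ha b hb)
    · rw [mergePhi_of_mem ha, mergePhi_of_not_mem hb]
      exact ⟨a, ha, hab⟩
    · rw [mergePhi_of_not_mem ha, mergePhi_of_mem hb]
      exact ⟨b, hb, hab.symm⟩
    · rw [mergePhi_of_not_mem ha, mergePhi_of_not_mem hb]
      exact hab

@[simp] lemma mergeHom_apply {H : SimpleGraph V} {S : Finset V}
    {hS : ∀ a ∈ S, ∀ b ∈ S, ¬ H.Adj a b} (v : V) :
    mergeHom H S hS v = mergePhi S v := rfl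

/-- If the edge joining the two endpoints of a path appears among its edges, the
path has length 1. -/
lemma length_eq_one_of_mem_edges {H : SimpleGraph V} {u v : V}
    (p : H.Walk u v) (hp : p.IsPath) (he : s(u, v) ∈ p.edges) : p.length = 1 := by
  cases p with
  | nil => simp at he
  | @cons _ w _ ha r =>
    rw [Walk.edges_cons, List.mem_cons] at he
    rw [Walk.cons_isPath_iff] at hp
    rcases he with he | he
    · rw [Sym2.eq_iff] at he
      rcases he with ⟨-, rfl⟩ | ⟨rfl, rfl⟩
      · rw [Walk.isPath_iff_eq_nil.mp hp.1]
        simp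
      · exact absurd ha H.irrefl
    · exact absurd (Walk.fst_mem_support_of_mem_edges r he) hp.2

lemma cycle_length_le_card [Fintype V] {G : SimpleGraph V} {u : V}
    {c : G.Walk u u} (hc : c.IsCycle) : c.length ≤ Fintype.card V := by
  have h1 := hc.support_nodup.length_le_card
  rwa [List.length_tail, Walk.length_support, Nat.add_sub_cancel] at h1

/-- The common final step: from an induced cycle of length ≥ 6 in `mergeGraph H S`,
conclude the conjunction appearing in the main theorem. -/
lemma licl_final [Fintype V] [DecidableEq V] {H : SimpleGraph V} {S : Finset V}
    (c : (mergeGraph H S).Walk none none) (hc : c.IsCycle)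
    (hind : IsInducedWalk (mergeGraph H S) c) (hlen : 6 ≤ c.length) :
    (∃ (u : Option {x : V // x ∉ S}) (c : (mergeGraph H S).Walk u u),
        c.IsCycle ∧ IsInducedWalk (mergeGraph H S) c ∧ 6 ≤ c.length) ∧
      5 < LICL (mergeGraph H S) := by
  refine ⟨⟨none, c, hc, hind, hlen⟩, ?_⟩
  rw [LICL]
  have hbdd : BddAbove {n | ∃ (u : Option {x : V // x ∉ S})
      (w : (mergeGraph H S).Walk u u), w.IsCycle ∧ IsInducedWalk (mergeGraph H S) w ∧
      w.length = n} := by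
    refine ⟨Fintype.card (Option {x : V // x ∉ S}), ?_⟩
    rintro n ⟨u, w, hw, -, rfl⟩
    exact cycle_length_le_card hw
  have hm : c.length ∈ {n | ∃ (u : Option {x : V // x ∉ S})
      (w : (mergeGraph H S).Walk u u), w.IsCycle ∧ IsInducedWalk (mergeGraph H S) w ∧
      w.length = n} := ⟨none, c, hc, hind, rfl⟩
  have hle := le_csSup hbdd hm
  omega

/-- Case A: an induced cycle at `h` gives an induced cycle in `mergeGraph H {h}`. -/
lemma cycle_case [DecidableEq V] {H : SimpleGraph V} {h : V} (c : H.Walk h h)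
    (hc : c.IsCycle) (hind : IsInducedWalk H c)
    (hS : ∀ a ∈ ({h} : Finset V), ∀ b ∈ ({h} : Finset V), ¬ H.Adj a b) :
    ∃ c' : (mergeGraph H ({h} : Finset V)).Walk none none,
      c'.IsCycle ∧ IsInducedWalk (mergeGraph H ({h} : Finset V)) c' ∧
      c'.length = c.length := by
  set S : Finset V := {h} with hSdef
  have hhS : h ∈ S := Finset.mem_singleton_self h
  set φ := mergeHom H S hS with hφdef
  have hinj : Function.Injective φ := by
    intro a b hab
    rw [hφdef, mergeHom_apply, mergeHom_apply] at hab
    by_cases ha : a ∈ S <;> by_cases hb : b ∈ S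
    · rw [Finset.mem_singleton.mp ha, Finset.mem_singleton.mp hb]
    · rw [mergePhi_of_mem ha, mergePhi_of_not_mem hb] at hab; simp at hab
    · rw [mergePhi_of_not_mem ha, mergePhi_of_mem hb] at hab; simp at hab
    · rw [mergePhi_of_not_mem ha, mergePhi_of_not_mem hb] at hab; simpa using hab
  have hφh : φ h = none := mergePhi_of_mem hhS
  refine ⟨(c.map φ).copy hφh hφh, ?_, ?_, ?_⟩
  · rw [Walk.isCycle_copy]
    exact hc.map hinj
  · intro a ha b hb hadj
    rw [Walk.support_copy, Walk.support_map] at ha hb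
    rw [Walk.edges_copy, Walk.edges_map]
    obtain ⟨za, hza, rfl⟩ := List.mem_map.mp ha
    obtain ⟨zb, hzb, rfl⟩ := List.mem_map.mp hb
    have hAdj : H.Adj za zb := by
      by_cases haS : za ∈ S <;> by_cases hbS : zb ∈ S
      · rw [hφdef, mergeHom_apply, mergeHom_apply, mergePhi_of_mem haS,
          mergePhi_of_mem hbS] at hadj
        exact absurd hadj mergeGraph_adj_none_none
      · rw [hφdef, mergeHom_apply, mergeHom_apply, mergePhi_of_mem haS,
          mergePhi_of_not_mem hbS] at hadj
        obtain ⟨s, hs, hadj'⟩ := hadj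
        rw [Finset.mem_singleton.mp haS, ← Finset.mem_singleton.mp hs]
        exact hadj'
      · rw [hφdef, mergeHom_apply, mergeHom_apply, mergePhi_of_not_mem haS,
          mergePhi_of_mem hbS] at hadj
        obtain ⟨s, hs, hadj'⟩ := hadj
        rw [Finset.mem_singleton.mp hbS, ← Finset.mem_singleton.mp hs]
        exact hadj'.symm
      · rw [hφdef, mergeHom_apply, mergeHom_apply, mergePhi_of_not_mem haS,
          mergePhi_of_not_mem hbS] at hadj
        exact hadj
    exact List.mem_map.mpr ⟨s(za, zb), hind za hza zb hzb hAdj, Sym2.map_pair_eq φ za zb⟩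
  · rw [Walk.length_copy, Walk.length_map]

/-- Case B: an induced path from `h` to `h' ≠ h` of length ≥ 6 gives an induced cycle
in `mergeGraph H {h, h'}`. -/
lemma path_case [DecidableEq V] {H : SimpleGraph V} {h h' : V} (p : H.Walk h h')
    (hne : h ≠ h') (hp : p.IsPath) (hind : IsInducedWalk H p) (hlen : 6 ≤ p.length)
    (hS : ∀ a ∈ ({h, h'} : Finset V), ∀ b ∈ ({h, h'} : Finset V), ¬ H.Adj a b) :
    ∃ c : (mergeGraph H ({h, h'} : Finset V)).Walk none none,
      c.IsCycle ∧ IsInducedWalk (mergeGraph H ({h, h'} : Finset V)) c ∧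
      c.length = p.length := by
  set S : Finset V := {h, h'} with hSdef
  have hhS : h ∈ S := Finset.mem_insert_self _ _
  have hh'S : h' ∈ S := Finset.mem_insert_of_mem (Finset.mem_singleton_self _)
  obtain ⟨x, hax, q, rfl⟩ := Walk.exists_eq_cons_of_ne hne p
  rw [Walk.cons_isPath_iff] at hp
  obtain ⟨hq, hh_not⟩ := hp
  rw [Walk.length_cons] at hlen
  have hx_ne_h : x ≠ h := fun hxh => hh_not (hxh ▸ q.start_mem_support)
  have hx_ne_h' : x ≠ h' := by
    rintro rfl
    exact hS h hhS x hh'S hax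
  have hxS : x ∉ S := by simp [hSdef, hx_ne_h, hx_ne_h']
  set φ := mergeHom H S hS with hφdef
  have hqS : ∀ a ∈ q.support, a ∈ S → a = h' := by
    intro a ha haS
    rcases Finset.mem_insert.mp haS with rfl | h2
    · exact absurd ha hh_not
    · exact Finset.mem_singleton.mp h2
  have hxh'_edge : s(x, h') ∉ q.edges := by
    intro he
    have h1 := length_eq_one_of_mem_edges q hq he
    omega
  have hφx : φ x = some ⟨x, hxS⟩ := mergePhi_of_not_mem hxS
  have hφh' : φ h' = none := mergePhi_of_mem hh'S
  have hadj0 : (mergeGraph H S).Adj none (some ⟨x, hxS⟩) := ⟨h, hhS, hax⟩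
  refine ⟨Walk.cons hadj0 ((q.map φ).copy hφx hφh'), ?_, ?_, ?_⟩
  · rw [Walk.cons_isCycle_iff]
    constructor
    · rw [Walk.isPath_copy, Walk.isPath_def, Walk.support_map]
      refine hq.support_nodup.map_on ?_
      intro a ha b hb hab
      rw [hφdef, mergeHom_apply, mergeHom_apply] at hab
      by_cases haS : a ∈ S <;> by_cases hbS : b ∈ S
      · rw [hqS a ha haS, hqS b hb hbS]
      · rw [mergePhi_of_mem haS, mergePhi_of_not_mem hbS] at hab; simp at hab
      · rw [mergePhi_of_not_mem haS, mergePhi_of_mem hbS] at hab; simp at hab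
      · rw [mergePhi_of_not_mem haS, mergePhi_of_not_mem hbS] at hab; simpa using hab
    · rw [Walk.edges_copy, Walk.edges_map]
      intro hmem
      obtain ⟨e, he, heq⟩ := List.mem_map.mp hmem
      induction e using Sym2.ind with
      | _ a b =>
        rw [Sym2.map_pair_eq, Sym2.eq_iff] at heq
        rcases heq with ⟨h1, h2⟩ | ⟨h1, h2⟩
        · rw [hφdef, mergeHom_apply] at h1 h2
          have ha' : a = h' :=
            hqS a (Walk.fst_mem_support_of_mem_edges q he) (mergePhi_eq_none h1)
          have hbx : b = x := mergePhi_eq_some h2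
          subst ha'; subst hbx
          rw [Sym2.eq_swap] at he
          exact hxh'_edge he
        · rw [hφdef, mergeHom_apply] at h1 h2
          have hb' : b = h' :=
            hqS b (Walk.snd_mem_support_of_mem_edges q he) (mergePhi_eq_none h2)
          have hax' : a = x := mergePhi_eq_some h1
          subst hb'; subst hax'
          exact hxh'_edge he
  · intro a ha b hb hadj
    rw [Walk.support_cons, Walk.support_copy, Walk.support_map] at ha hb
    rw [Walk.edges_cons, Walk.edges_copy, Walk.edges_map]
    have hmem_some : ∀ (z : {x : V // x ∉ S}),
        (some z : Option {x : V // x ∉ S}) ∈ none :: q.support.map φ →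
        z.1 ∈ q.support := by
      intro z hz
      rcases List.mem_cons.mp hz with h0 | h0
      · simp at h0
      · obtain ⟨w, hw, hw2⟩ := List.mem_map.mp h0
        rw [hφdef, mergeHom_apply] at hw2
        exact mergePhi_eq_some hw2 ▸ hw
    have key : ∀ (z : {x : V // x ∉ S}), z.1 ∈ q.support → (∃ s ∈ S, H.Adj s z.1) →
        s(none, (some z : Option {x : V // x ∉ S})) ∈
          s(none, (some ⟨x, hxS⟩ : Option {x : V // x ∉ S})) ::
            q.edges.map (Sym2.map φ) := by
      rintro z hzq ⟨s, hsS, hsz⟩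
      have hzsup : z.1 ∈ (Walk.cons hax q).support := by
        rw [Walk.support_cons]; exact List.mem_cons_of_mem _ hzq
      rcases Finset.mem_insert.mp hsS with rfl | hs2
      · have hedge : s(s, z.1) ∈ (Walk.cons hax q).edges :=
          hind s (Walk.start_mem_support _) z.1 hzsup hsz
        rw [Walk.edges_cons, List.mem_cons] at hedge
        rcases hedge with h0 | h0
        · rw [Sym2.eq_iff] at h0
          rcases h0 with ⟨-, hzx⟩ | ⟨hhx, -⟩
          · have : z = ⟨x, hxS⟩ := Subtype.ext hzx
            rw [this]
            exact List.mem_cons_self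
          · exact absurd hhx.symm hx_ne_h
        · exact absurd (Walk.fst_mem_support_of_mem_edges q h0) hh_not
      · have hs' : s = h' := Finset.mem_singleton.mp hs2
        subst hs'
        have hedge : s(s, z.1) ∈ (Walk.cons hax q).edges :=
          hind s (Walk.end_mem_support _) z.1 hzsup hsz
        rw [Walk.edges_cons, List.mem_cons] at hedge
        rcases hedge with h0 | h0
        · rw [Sym2.eq_iff] at h0
          rcases h0 with ⟨hh'h, -⟩ | ⟨hh'x, -⟩
          · exact absurd hh'h.symm hne
          · exact absurd hh'x.symm hx_ne_h'
        · refine List.mem_cons_of_mem _ (List.mem_map.mpr ⟨s(s, z.1), h0, ?_⟩)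
          rw [Sym2.map_pair_eq, hφh', hφdef, mergeHom_apply, mergePhi_of_not_mem z.2]
    rcases a with _ | z1 <;> rcases b with _ | z2
    · exact absurd hadj mergeGraph_adj_none_none
    · exact key z2 (hmem_some z2 hb) hadj
    · have hswap : s((some z1 : Option {x : V // x ∉ S}), none) = s(none, some z1) :=
        Sym2.eq_swap
      rw [hswap]
      exact key z1 (hmem_some z1 ha) hadj
    · have h1 := hmem_some z1 ha
      have h2 := hmem_some z2 hb
      have hAdj : H.Adj z1.1 z2.1 := hadj
      have hedge : s(z1.1, z2.1) ∈ (Walk.cons hax q).edges :=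
        hind z1.1 (by rw [Walk.support_cons]; exact List.mem_cons_of_mem _ h1)
          z2.1 (by rw [Walk.support_cons]; exact List.mem_cons_of_mem _ h2) hAdj
      rw [Walk.edges_cons, List.mem_cons] at hedge
      rcases hedge with h0 | h0
      · rw [Sym2.eq_iff] at h0
        rcases h0 with ⟨hz1h, -⟩ | ⟨-, hz2h⟩
        · exact absurd (hz1h ▸ hhS) z1.2
        · exact absurd (hz2h ▸ hhS) z2.2
      · refine List.mem_cons_of_mem _ (List.mem_map.mpr ⟨s(z1.1, z2.1), h0, ?_⟩)
        rw [Sym2.map_pair_eq, hφdef, mergeHom_apply, mergeHom_apply,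
          mergePhi_of_not_mem z1.2, mergePhi_of_not_mem z2.2]
  · rw [Walk.length_cons, Walk.length_copy, Walk.length_map, Walk.length_cons]

end Aux

/-- if `LIPCO(H) > 5` then there are an orbit `ψ` of `H` and a set
`S ∈ IS(ψ)` such that `H_S` contains an induced cycle of length at least 6,
i.e. `LICL(H_S) > 5`. -/
theorem exists_merge_with_long_induced_cycle {V : Type*} [Fintype V] [DecidableEq V]
    (H : SimpleGraph V) (hlip : 5 < LIPCO H) :
    ∃ ψ : Finset V, IsOrbit H ψ ∧ ∃ S ∈ indepSubsets H ψ,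
      (∃ (u : Option {x : V // x ∉ S}) (c : (mergeGraph H S).Walk u u),
        c.IsCycle ∧ IsInducedWalk (mergeGraph H S) c ∧ 6 ≤ c.length) ∧
      5 < LICL (mergeGraph H S) := by
  classical
  rw [LIPCO] at hlip
  set A := {n | ∃ (h h' : V) (p : H.Walk h h'), h ≠ h' ∧ (∃ σ : H ≃g H, σ h = h') ∧
      p.IsPath ∧ IsInducedWalk H p ∧ p.length = n} with hA
  set B := {n | ∃ (h : V) (c : H.Walk h h), c.IsCycle ∧ IsInducedWalk H c ∧
      c.length = n} with hB
  have hbdd : BddAbove (A ∪ B) := by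
    refine ⟨Fintype.card V, ?_⟩
    rintro n (⟨h, h', p, -, -, hp, -, rfl⟩ | ⟨h, c, hc, -, rfl⟩)
    · exact hp.length_lt.le
    · exact cycle_length_le_card hc
  have hne : (A ∪ B).Nonempty := by
    rcases Set.eq_empty_or_nonempty (A ∪ B) with h | h
    · rw [h, csSup_empty] at hlip
      simp at hlip
    · exact h
  have hmem := Nat.sSup_mem hne hbdd
  rcases hmem with hP | hC
  · -- path case
    obtain ⟨h, h', p, hneq, ⟨σ, hσ⟩, hp, hind, hlen⟩ := hP
    have h6 : 6 ≤ p.length := by omega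
    have hnadj : ¬ H.Adj h h' := by
      intro hadj
      have h1 := length_eq_one_of_mem_edges p hp
        (hind h p.start_mem_support h' p.end_mem_support hadj)
      omega
    have hindep : ∀ a ∈ ({h, h'} : Finset V), ∀ b ∈ ({h, h'} : Finset V),
        ¬ H.Adj a b := by
      intro a ha b hb
      have ha' : a = h ∨ a = h' := by simpa using ha
      have hb' : b = h ∨ b = h' := by simpa using hb
      rcases ha' with h1 | h1 <;> rcases hb' with h2 | h2 <;> rw [h1, h2]
      · exact H.irrefl
      · exact hnadj
      · exact fun hx => hnadj hx.symm
      · exact H.irrefl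
    refine ⟨Finset.univ.filter (fun u => ∃ σ : H ≃g H, σ h = u),
      ⟨h, fun u => by simp⟩, {h, h'}, ?_, ?_⟩
    · simp only [indepSubsets, Finset.mem_filter, Finset.mem_powerset]
      refine ⟨?_, ⟨h, Finset.mem_insert_self _ _⟩, hindep⟩
      intro a ha
      rcases Finset.mem_insert.mp ha with rfl | ha
      · simp only [Finset.mem_filter, Finset.mem_univ, true_and]
        exact ⟨RelIso.refl H.Adj, rfl⟩
      · rw [Finset.mem_singleton.mp ha]
        simp only [Finset.mem_filter, Finset.mem_univ, true_and]
        exact ⟨σ, hσ⟩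
    · obtain ⟨c, hcyc, hcind, hclen⟩ := path_case p hneq hp hind h6 hindep
      exact licl_final c hcyc hcind (by omega)
  · -- cycle case
    obtain ⟨h, c, hc, hind, hlen⟩ := hC
    have hindep : ∀ a ∈ ({h} : Finset V), ∀ b ∈ ({h} : Finset V), ¬ H.Adj a b := by
      intro a ha b hb
      rw [Finset.mem_singleton.mp ha, Finset.mem_singleton.mp hb]
      exact H.irrefl
    refine ⟨Finset.univ.filter (fun u => ∃ σ : H ≃g H, σ h = u),
      ⟨h, fun u => by simp⟩, {h}, ?_, ?_⟩
    · simp only [indepSubsets, Finset.mem_filter, Finset.mem_powerset]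
      refine ⟨?_, Finset.singleton_nonempty h, hindep⟩
      intro a ha
      rw [Finset.mem_singleton.mp ha]
      simp only [Finset.mem_filter, Finset.mem_univ, true_and]
      exact ⟨RelIso.refl H.Adj, rfl⟩
    · obtain ⟨c', hcyc, hcind, hclen⟩ := cycle_case c hc hind hindep
      exact licl_final c' hcyc hcind (by omega)
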